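/- Let A, B > 0 and suppose u : (0, R) → ℝ is differentiable with u'(r) ≤ -u(r)²/A - B and lim sup_{r→0+} r·u(r) ≤ A. Then u(r) ≤ √(AB)·cot(√(B/A)·r) for all 0 < r < min(R, π√(A/B)); in particular u cannot be defined (finite) past r = π√(A/B), so R ≤ π√(A/B). -/

import Mathlib

open Real Set Filter

lemma cot_anti_aux {x y : ℝ} (hx : 0 < x) (hy : y < π) (hxy : x ≤ y) :
    Real.cot y ≤ Real.cot x := by
  have hsx : 0 < Real.sin x := Real.sin_pos_of_pos_of_lt_pi hx (lt_of_le_of_lt hxy hy)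
  have hsy : 0 < Real.sin y := Real.sin_pos_of_pos_of_lt_pi (lt_of_lt_of_le hx hxy) hy
  rw [Real.cot_eq_cos_div_sin, Real.cot_eq_cos_div_sin, div_le_div_iff₀ hsy hsx]
  have h : 0 ≤ Real.sin (y - x) :=
    Real.sin_nonneg_of_nonneg_of_le_pi (sub_nonneg.2 hxy) (by linarith)
  rw [Real.sin_sub] at h
  nlinarith

/-- Riccati comparison lemma abstracting the Sturm–Liouville argument: if `A, B > 0`,
`u' ≤ -u²/A - B` on `(0,R)` and `limsup_{r→0+} r·u(r) ≤ A`, then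
`u(r) ≤ √(AB)·cot(√(B/A)·r)` for `0 < r < min R (π√(A/B))`, and `R ≤ π√(A/B)`. -/
theorem stmt_11 (A B R : ℝ) (hA : 0 < A) (hB : 0 < B) (hR : 0 < R)
    (u : ℝ → ℝ) (hu : DifferentiableOn ℝ u (Ioo 0 R))
    (hode : ∀ r ∈ Ioo 0 R, deriv u r ≤ -(u r ^ 2) / A - B)
    (hlim : Filter.limsup (fun r => r * u r) (nhdsWithin 0 (Ioi 0)) ≤ A) :
    (∀ r, 0 < r → r < min R (π * Real.sqrt (A / B)) →
        u r ≤ Real.sqrt (A * B) * Real.cot (Real.sqrt (B / A) * r)) ∧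
      R ≤ π * Real.sqrt (A / B) := by
  set s := Real.sqrt (A * B) with hs_def
  have hs : 0 < s := Real.sqrt_pos.2 (mul_pos hA hB)
  have hs2 : s ^ 2 = A * B := Real.sq_sqrt (mul_pos hA hB).le
  set k := Real.sqrt (B / A) with hk_def
  have hkA : k = s / A := by
    rw [hk_def, show B / A = (s / A) ^ 2 by rw [div_pow, hs2]; field_simp]
    exact Real.sqrt_sq (by positivity)
  have hk : 0 < k := by rw [hkA]; positivity
  have hABk : π * Real.sqrt (A / B) = π / k := by
    have h1 : Real.sqrt (A / B) = A / s := by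
      rw [show A / B = (A / s) ^ 2 by rw [div_pow, hs2]; field_simp]
      exact Real.sqrt_sq (by positivity)
    rw [h1, hkA]
    field_simp
  -- the phase function
  set θ : ℝ → ℝ := fun r => π / 2 - Real.arctan (u r / s) with hθ_def
  clear_value θ
  have hθpos : ∀ x, 0 < θ x := by
    intro x
    have := Real.arctan_lt_pi_div_two (u x / s)
    rw [hθ_def]
    linarith
  have hθltpi : ∀ x, θ x < π := by
    intro x
    have := Real.neg_pi_div_two_lt_arctan (u x / s)
    rw [hθ_def]
    linarith [Real.pi_pos]
  -- derivative of θ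
  have hderiv : ∀ r ∈ Ioo (0:ℝ) R,
      HasDerivAt θ (-(1 / (1 + (u r / s) ^ 2) * (deriv u r / s))) r := by
    intro r hr
    rw [hθ_def]
    have hudiff : DifferentiableAt ℝ u r := hu.differentiableAt (isOpen_Ioo.mem_nhds hr)
    have h1 : HasDerivAt (fun x => u x / s) (deriv u r / s) r := hudiff.hasDerivAt.div_const s
    have h2 : HasDerivAt (fun x => Real.arctan (u x / s))
        (1 / (1 + (u r / s) ^ 2) * (deriv u r / s)) r :=
      h1.arctan
    have h3 := (hasDerivAt_const r (π / 2)).sub h2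
    simpa [Pi.sub_def] using h3
  -- the derivative is at least k
  have hge : ∀ r ∈ Ioo (0:ℝ) R, k ≤ -(1 / (1 + (u r / s) ^ 2) * (deriv u r / s)) := by
    intro r hr
    have hu' := hode r hr
    set q := u r with hq
    have hpo : (0:ℝ) < 1 + (q / s) ^ 2 := by positivity
    rw [hkA, show -(1 / (1 + (q / s) ^ 2) * (deriv u r / s))
        = (-(deriv u r) / s) / (1 + (q / s) ^ 2) from by ring, le_div_iff₀ hpo]
    have heq : s / A * (1 + (q / s) ^ 2) = (q ^ 2 / A + B) / s := by
      rw [div_pow, hs2]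
      field_simp
      linear_combination (A * B + q ^ 2) * hs2
    rw [heq]
    gcongr
    linarith [hu', show -q ^ 2 / A = -(q ^ 2 / A) from by ring]
  -- monotonicity of θ r - k r
  set f : ℝ → ℝ := fun r => θ r - k * r with hf_def
  clear_value f
  have hfderiv : ∀ r ∈ Ioo (0:ℝ) R,
      HasDerivAt f (-(1 / (1 + (u r / s) ^ 2) * (deriv u r / s)) - k) r := by
    intro r hr
    rw [hf_def]
    exact (hderiv r hr).sub (by simpa using (hasDerivAt_id r).const_mul k)
  have hfdiff : DifferentiableOn ℝ f (Ioo 0 R) :=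
    fun x hx => ((hfderiv x hx).differentiableAt).differentiableWithinAt
  have hmono : MonotoneOn f (Ioo 0 R) := by
    apply monotoneOn_of_deriv_nonneg (convex_Ioo 0 R) hfdiff.continuousOn
    · rw [interior_Ioo]; exact hfdiff
    · intro x hx
      rw [interior_Ioo] at hx
      rw [(hfderiv x hx).deriv]
      linarith [hge x hx]
  -- θ r ≥ k r on (0, R)
  have hkey : ∀ r ∈ Ioo (0:ℝ) R, k * r ≤ θ r := by
    intro r hr
    by_contra h
    push_neg at h
    set ε := min (r / 2) ((k * r - θ r) / (2 * k)) with hε_def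
    clear_value ε
    have hε0 : 0 < ε := by
      rw [hε_def]
      exact lt_min (by linarith [hr.1]) (div_pos (by linarith) (by linarith))
    have hεr : ε < r := by
      rw [hε_def]
      exact lt_of_le_of_lt (min_le_left _ _) (by linarith [hr.1])
    have hεmem : ε ∈ Ioo (0:ℝ) R := ⟨hε0, lt_trans hεr hr.2⟩
    have hm := hmono hεmem hr hεr.le
    rw [hf_def] at hm
    simp only at hm
    have hkε : k * ε ≤ (k * r - θ r) / 2 := by
      have hle : ε ≤ (k * r - θ r) / (2 * k) := by
        rw [hε_def]; exact min_le_right _ _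
      calc k * ε ≤ k * ((k * r - θ r) / (2 * k)) := by
            exact mul_le_mul_of_nonneg_left hle hk.le
        _ = (k * r - θ r) / 2 := by field_simp
    have := hθpos ε
    linarith
  refine ⟨?_, ?_⟩
  · intro r hr0 hrlt
    have hrR : r < R := lt_of_lt_of_le hrlt (min_le_left _ _)
    have hrπ : k * r < π := by
      have h1 : r < π / k := by
        have := lt_of_lt_of_le hrlt (min_le_right _ _)
        rwa [hABk] at this
      calc k * r < k * (π / k) := by exact mul_lt_mul_of_pos_left h1 hk
        _ = π := by field_simp
    have hrmem : r ∈ Ioo (0:ℝ) R := ⟨hr0, hrR⟩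
    have h1 : k * r ≤ θ r := hkey r hrmem
    have h2 : Real.cot (θ r) ≤ Real.cot (k * r) :=
      cot_anti_aux (mul_pos hk hr0) (hθltpi r) h1
    have hcot : Real.cot (θ r) = u r / s := by
      rw [hθ_def]
      rw [Real.cot_eq_cos_div_sin, Real.cos_pi_div_two_sub, Real.sin_pi_div_two_sub,
        ← Real.tan_eq_sin_div_cos, Real.tan_arctan]
    have : u r = s * Real.cot (θ r) := by rw [hcot]; field_simp
    rw [this]
    exact mul_le_mul_of_nonneg_left h2 hs.le
  · rw [hABk]
    by_contra h
    push_neg at h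
    set r := (π / k + R) / 2 with hr_def
    clear_value r
    have hπk : 0 < π / k := by positivity
    have hrmem : r ∈ Ioo (0:ℝ) R := ⟨by rw [hr_def]; linarith, by rw [hr_def]; linarith⟩
    have h1 : k * r ≤ θ r := hkey r hrmem
    have h2 : θ r < π := hθltpi r
    have h3 : π < k * r := by
      have : π / k < r := by rw [hr_def]; linarith
      calc π = k * (π / k) := by field_simp
        _ < k * r := by exact mul_lt_mul_of_pos_left this hk
    linarith
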